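/- Every nonzero finite dimensional representation M of a finite quiver has a unique subrepresentation M₁ of maximal slope μ(M₁) = Θ(M₁)/σ(M₁) among all nonzero subrepresentations of M, and of maximal total dimension σ(M₁) among those of maximal slope. Moreover M₁ is (Θ,σ)-semistable and every nonzero subrepresentation N ⊆ M with μ(N) = μ(M₁) satisfies N ⊆ M₁. -/

import Mathlib

open Finset

/-- A subrepresentation of a fixed representation `M` of a quiver with vertex set `V`,
arrow set `E`, source/target maps `src tgt : E → V` and structure maps `f`. -/
structure Subrep {k V E : Type} [Field k] (M : V → Type) [∀ v, AddCommGroup (M v)]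
    [∀ v, Module k (M v)] (src tgt : E → V) (f : ∀ e, M (src e) →ₗ[k] M (tgt e)) : Type where
  N : ∀ v, Submodule k (M v)
  compat : ∀ e, (N (src e)).map (f e) ≤ N (tgt e)

namespace Subrep

variable {k V E : Type} [Field k] [Fintype V] {M : V → Type}
  [∀ v, AddCommGroup (M v)] [∀ v, Module k (M v)] [∀ v, FiniteDimensional k (M v)]
  {src tgt : E → V} {f : ∀ e, M (src e) →ₗ[k] M (tgt e)}

instance : PartialOrder (Subrep M src tgt f) :=
  PartialOrder.lift Subrep.N (fun A B h => by cases A; cases B; simpa using h)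

/-- The zero subrepresentation. -/
def bot : Subrep M src tgt f := ⟨fun _ => ⊥, fun e => by simp⟩

/-- The whole representation `M` as a subrepresentation of itself. -/
def top : Subrep M src tgt f := ⟨fun _ => ⊤, fun e => le_top⟩

/-- Sum of two subrepresentations. -/
def sup (A B : Subrep M src tgt f) : Subrep M src tgt f :=
  ⟨fun v => A.N v ⊔ B.N v, fun e => by
    rw [Submodule.map_sup]
    exact sup_le_sup (A.compat e) (B.compat e)⟩

/-- `tot c A = ∑_v c_v · dim A_v`; gives `Θ(A)` resp. `σ(A)` for `c = Θ` resp. `σ`. -/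
noncomputable def tot (c : V → ℤ) (A : Subrep M src tgt f) : ℤ :=
  ∑ v, c v * (Module.finrank k (A.N v) : ℤ)

/-- The slope `μ(A) = Θ(A)/σ(A)` as a rational number. -/
noncomputable def slope (Θ σ : V → ℤ) (A : Subrep M src tgt f) : ℚ :=
  (tot Θ A : ℚ) / (tot σ A : ℚ)

/-- The slope of the quotient `B/A` for `A ≤ B`. -/
noncomputable def quotSlope (Θ σ : V → ℤ) (A B : Subrep M src tgt f) : ℚ :=
  ((tot Θ B - tot Θ A : ℤ) : ℚ) / ((tot σ B - tot σ A : ℤ) : ℚ)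

/-- `(Θ,σ)`-semistability of the subrepresentation `A`, viewed as a representation itself:
every nonzero proper subrepresentation of `A` has slope at most `μ(A)`. -/
def Semistable (Θ σ : V → ℤ) (A : Subrep M src tgt f) : Prop :=
  ∀ B : Subrep M src tgt f, B ≤ A → B ≠ bot → B ≠ A → slope Θ σ B ≤ slope Θ σ A

/-- `(Θ,σ)`-semistability of the quotient representation `B/A`, expressed via the
correspondence between subrepresentations of `B/A` and subrepresentations `P` with
`A ≤ P ≤ B`. -/
def QuotSemistable (Θ σ : V → ℤ) (A B : Subrep M src tgt f) : Prop :=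
  ∀ P : Subrep M src tgt f, A ≤ P → P ≤ B → P ≠ A → quotSlope Θ σ A P ≤ quotSlope Θ σ A B

/-- `F` (indexed by `ℕ`, constant equal to `⊤` from `n+1` on) is a Harder–Narasimhan
filtration `0 = F 0 ⊂ F 1 ⊂ ⋯ ⊂ F (n+1) = M` : successive quotients have strictly
decreasing slopes and are `(Θ,σ)`-semistable. -/
def IsHNFiltration (Θ σ : V → ℤ) (n : ℕ) (F : ℕ → Subrep M src tgt f) : Prop :=
  F 0 = bot ∧ (∀ i, n + 1 ≤ i → F i = top) ∧
  (∀ i ≤ n, F i < F (i+1)) ∧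
  (∀ i, i + 1 ≤ n → quotSlope Θ σ (F (i+1)) (F (i+2)) < quotSlope Θ σ (F i) (F (i+1))) ∧
  (∀ i ≤ n, QuotSemistable Θ σ (F i) (F (i+1)))

end Subrep

namespace Subrep

variable {k V E : Type} [Field k] [Fintype V] {M : V → Type}
  [∀ v, AddCommGroup (M v)] [∀ v, Module k (M v)] [∀ v, FiniteDimensional k (M v)]
  {src tgt : E → V} {f : ∀ e, M (src e) →ₗ[k] M (tgt e)}

/-- Intersection of two subrepresentations. -/
def inf (A B : Subrep M src tgt f) : Subrep M src tgt f :=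
  ⟨fun v => A.N v ⊓ B.N v, fun e => le_inf
    ((Submodule.map_mono inf_le_left).trans (A.compat e))
    ((Submodule.map_mono inf_le_right).trans (B.compat e))⟩

lemma le_def {A B : Subrep M src tgt f} : A ≤ B ↔ ∀ v, A.N v ≤ B.N v := Iff.rfl

lemma N_injective : Function.Injective (Subrep.N (M := M) (src := src) (tgt := tgt) (f := f)) :=
  fun A B h => by cases A; cases B; simpa using h

lemma eq_bot_iff' {A : Subrep M src tgt f} : A = bot ↔ ∀ v, A.N v = ⊥ := by
  constructor
  · rintro rfl v; rfl
  · intro h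
    exact N_injective (funext h)

lemma le_sup_left' (A B : Subrep M src tgt f) : A ≤ A.sup B := fun _ => le_sup_left
lemma le_sup_right' (A B : Subrep M src tgt f) : B ≤ A.sup B := fun _ => le_sup_right
lemma le_top' (A : Subrep M src tgt f) : A ≤ top := fun _ => le_top

lemma tot_bot (c : V → ℤ) : tot c (bot : Subrep M src tgt f) = 0 := by
  show ∑ v, c v * (Module.finrank k (⊥ : Submodule k (M v)) : ℤ) = 0
  simp

lemma tot_sup_add_tot_inf (c : V → ℤ) (A B : Subrep M src tgt f) :
    tot c (A.sup B) + tot c (A.inf B) = tot c A + tot c B := by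
  simp only [tot, sup, inf, ← Finset.sum_add_distrib]
  refine Finset.sum_congr rfl fun v _ => ?_
  have := Submodule.finrank_sup_add_finrank_inf_eq (A.N v) (B.N v)
  have : ((Module.finrank k ↥(A.N v ⊔ B.N v) : ℤ) + (Module.finrank k ↥(A.N v ⊓ B.N v) : ℤ))
      = (Module.finrank k (A.N v) : ℤ) + (Module.finrank k (B.N v) : ℤ) := by
    exact_mod_cast congrArg (Nat.cast : ℕ → ℤ) this
  rw [← mul_add, ← mul_add]
  exact congrArg (c v * ·) this

lemma tot_mono {c : V → ℤ} (hc : ∀ v, 0 ≤ c v) {A B : Subrep M src tgt f} (h : A ≤ B) :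
    tot c A ≤ tot c B := by
  refine Finset.sum_le_sum fun v _ => ?_
  exact mul_le_mul_of_nonneg_left (by exact_mod_cast Submodule.finrank_mono (h v)) (hc v)

lemma tot_pos {c : V → ℤ} (hc : ∀ v, 0 < c v) {A : Subrep M src tgt f} (hA : A ≠ bot) :
    0 < tot c A := by
  obtain ⟨v, hv⟩ : ∃ v, A.N v ≠ ⊥ := by
    by_contra h
    push_neg at h
    exact hA (eq_bot_iff'.2 h)
  have hrank : 0 < Module.finrank k (A.N v) := Module.finrank_pos_iff.2 (Submodule.nontrivial_iff_ne_bot.2 hv)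
  refine Finset.sum_pos' (fun w _ => mul_nonneg (hc w).le (by positivity)) ⟨v, Finset.mem_univ v, ?_⟩
  exact mul_pos (hc v) (by exact_mod_cast hrank)

lemma eq_of_le_of_tot_le {c : V → ℤ} (hc : ∀ v, 0 < c v) {A B : Subrep M src tgt f}
    (h : A ≤ B) (ht : tot c B ≤ tot c A) : A = B := by
  refine N_injective (funext fun v => ?_)
  refine Submodule.eq_of_le_of_finrank_le (h v) ?_
  by_contra hlt
  push_neg at hlt
  have : tot c A < tot c B := by
    refine Finset.sum_lt_sum (fun w _ => mul_le_mul_of_nonneg_left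
      (by exact_mod_cast Submodule.finrank_mono (h w)) (hc w).le)
      ⟨v, Finset.mem_univ v, ?_⟩
    exact mul_lt_mul_of_pos_left (by exact_mod_cast hlt) (hc v)
  omega

end Subrep

open Subrep in
/-- Every nonzero representation `M` has a unique nonzero subrepresentation `M₁` of
maximal slope and, among those, of maximal total dimension `σ(M₁)`; moreover `M₁` is
`(Θ,σ)`-semistable and contains every nonzero subrepresentation of the same slope. -/
theorem maximal_destabilizing {k V E : Type} [Field k] [Fintype V] {M : V → Type}
    [∀ v, AddCommGroup (M v)] [∀ v, Module k (M v)] [∀ v, FiniteDimensional k (M v)]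
    {src tgt : E → V} {f : ∀ e, M (src e) →ₗ[k] M (tgt e)}
    (Θ σ : V → ℤ) (hσ : ∀ v, 0 < σ v)
    (hM : (top : Subrep M src tgt f) ≠ bot) :
    ∃! M₁ : Subrep M src tgt f, M₁ ≠ bot ∧
      (∀ N : Subrep M src tgt f, N ≠ bot → slope Θ σ N ≤ slope Θ σ M₁) ∧
      (∀ N : Subrep M src tgt f, N ≠ bot → slope Θ σ N = slope Θ σ M₁ →
        tot σ N ≤ tot σ M₁) ∧
      Semistable Θ σ M₁ ∧
      (∀ N : Subrep M src tgt f, N ≠ bot → slope Θ σ N = slope Θ σ M₁ → N ≤ M₁) := by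
  classical
  set C : ℤ := ∑ v, |Θ v| * (Module.finrank k (M v) : ℤ) with hC
  set D : ℤ := tot σ (top : Subrep M src tgt f) with hD
  have htotΘ : ∀ A : Subrep M src tgt f, tot Θ A ∈ Set.Icc (-C) C := by
    intro A
    have habs : |tot Θ A| ≤ C := by
      refine (Finset.abs_sum_le_sum_abs _ _).trans (Finset.sum_le_sum fun v _ => ?_)
      rw [abs_mul, abs_of_nonneg (by positivity : (0:ℤ) ≤ (Module.finrank k (A.N v) : ℤ))]
      exact mul_le_mul_of_nonneg_left
        (by exact_mod_cast Submodule.finrank_le (A.N v)) (abs_nonneg _)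
    exact abs_le.1 habs
  have hσpos : ∀ A : Subrep M src tgt f, A ≠ bot → (0 : ℚ) < (tot σ A : ℚ) := by
    intro A hA
    exact_mod_cast tot_pos hσ hA
  have htotσ : ∀ A : Subrep M src tgt f, A ≠ bot → tot σ A ∈ Set.Icc 1 D := fun A hA =>
    ⟨tot_pos hσ hA, tot_mono (fun v => (hσ v).le) (le_top' A)⟩
  set S : Set ℚ := {q | ∃ A : Subrep M src tgt f, A ≠ bot ∧ slope Θ σ A = q} with hS
  have hSfin : S.Finite := by
    refine Set.Finite.subset (Set.Finite.image (fun p : ℤ × ℤ => (p.1 : ℚ)/(p.2 : ℚ))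
      ((Set.finite_Icc (-C) C).prod (Set.finite_Icc 1 D))) ?_
    rintro q ⟨A, hA, rfl⟩
    exact ⟨(tot Θ A, tot σ A), ⟨htotΘ A, htotσ A hA⟩, rfl⟩
  have hSne : S.Nonempty := ⟨slope Θ σ top, top, hM, rfl⟩
  obtain ⟨μ, hμS, hμmax⟩ : ∃ μ ∈ S, ∀ q ∈ S, q ≤ μ := by
    obtain ⟨μ, hμ1, hμ2⟩ := S.exists_max_image id hSfin hSne
    exact ⟨μ, hμ1, hμ2⟩
  have hsl : ∀ N : Subrep M src tgt f, N ≠ bot → slope Θ σ N ≤ μ :=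
    fun N h => hμmax _ ⟨N, h, rfl⟩
  -- the key linear functional
  set dd : Subrep M src tgt f → ℚ := fun A => (tot Θ A : ℚ) - μ * (tot σ A : ℚ) with hdd
  have hdd_nonpos : ∀ A : Subrep M src tgt f, dd A ≤ 0 := by
    intro A
    by_cases hA : A = bot
    · simp [hdd, hA, tot_bot]
    · have h1 := hsl A hA
      rw [Subrep.slope, div_le_iff₀ (hσpos A hA)] at h1
      simpa [hdd] using sub_nonpos.2 h1
  have hdd_zero : ∀ A : Subrep M src tgt f, A ≠ bot → (slope Θ σ A = μ ↔ dd A = 0) := by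
    intro A hA
    rw [Subrep.slope, div_eq_iff (hσpos A hA).ne', hdd]
    constructor <;> intro h <;> simp only at h ⊢ <;> linarith
  -- closure of the maximal-slope subreps under sup
  have hsup : ∀ A B : Subrep M src tgt f, A ≠ bot → slope Θ σ A = μ → B ≠ bot →
      slope Θ σ B = μ → (A.sup B ≠ bot ∧ slope Θ σ (A.sup B) = μ) := by
    intro A B hA hAs hB hBs
    have hne : A.sup B ≠ bot := by
      intro h
      exact hA (eq_bot_iff'.2 fun v => le_bot_iff.1 (by
        have := le_sup_left' A B v
        rwa [h] at this))
    have hΘ : (tot Θ (A.sup B) : ℚ) + (tot Θ (A.inf B) : ℚ)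
        = (tot Θ A : ℚ) + (tot Θ B : ℚ) := by
      exact_mod_cast tot_sup_add_tot_inf Θ A B
    have hσ' : (tot σ (A.sup B) : ℚ) + (tot σ (A.inf B) : ℚ)
        = (tot σ A : ℚ) + (tot σ B : ℚ) := by
      exact_mod_cast tot_sup_add_tot_inf σ A B
    have hddsup : dd (A.sup B) = dd A + dd B - dd (A.inf B) := by
      simp only [hdd]
      linear_combination hΘ - μ * hσ'
    have h0 : 0 ≤ dd (A.sup B) := by
      have h1 := (hdd_zero A hA).1 hAs
      have h2 := (hdd_zero B hB).1 hBs
      have h3 := hdd_nonpos (A.inf B)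
      rw [hddsup, h1, h2]; linarith
    refine ⟨hne, le_antisymm (hsl _ hne) ?_⟩
    rw [Subrep.slope, le_div_iff₀ (hσpos _ hne)]
    simp only [hdd] at h0
    linarith
  -- pick M₁ of maximal σ among maximal-slope subreps
  obtain ⟨n, ⟨M₁, ⟨hM₁ne, hM₁sl⟩, hM₁n⟩, hmax⟩ :=
    Int.exists_greatest_of_bdd (P := fun n : ℤ => ∃ A : Subrep M src tgt f,
      (A ≠ bot ∧ slope Θ σ A = μ) ∧ tot σ A = n)
      ⟨D, fun z ⟨A, ⟨hA, _⟩, hz⟩ => hz ▸ (htotσ A hA).2⟩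
      (by obtain ⟨A, hA, hAs⟩ := hμS; exact ⟨tot σ A, A, ⟨hA, hAs⟩, rfl⟩)
  have hcontain : ∀ N : Subrep M src tgt f, N ≠ bot → slope Θ σ N = μ → N ≤ M₁ := by
    intro N hN hNs
    obtain ⟨hCne, hCs⟩ := hsup N M₁ hN hNs hM₁ne hM₁sl
    have h1 : tot σ (N.sup M₁) ≤ n := hmax _ ⟨N.sup M₁, ⟨hCne, hCs⟩, rfl⟩
    have h2 : M₁ = N.sup M₁ := eq_of_le_of_tot_le hσ (le_sup_right' N M₁)
      (by rw [hM₁n]; exact h1)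
    rw [h2]
    exact le_sup_left' N M₁
  refine ⟨M₁, ⟨hM₁ne, ?_, ?_, ?_, ?_⟩, ?_⟩
  · intro N hN; rw [hM₁sl]; exact hsl N hN
  · intro N hN hNs
    exact tot_mono (fun v => (hσ v).le) (hcontain N hN (by rw [← hM₁sl]; exact hNs))
  · intro B _ hB _
    rw [hM₁sl]; exact hsl B hB
  · intro N hN hNs
    exact hcontain N hN (by rw [← hM₁sl]; exact hNs)
  · rintro y ⟨hyne, hysl, -, -, hycont⟩
    have hyμ : slope Θ σ y = μ := by
      obtain ⟨A, hA, hAs⟩ := hμS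
      exact le_antisymm (hsl y hyne) (hAs ▸ hysl A hA)
    exact le_antisymm
      (hcontain y hyne hyμ)
      (hycont M₁ hM₁ne (by rw [hM₁sl, hyμ]))
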